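/- For every n and every k with 2 ≤ k ≤ n, there exists a hypergraph H on n vertices with χ_cf(H) = k and χ_um(H) = n − ⌈n/k⌉ + 1; hence the bound χ_um(H) ≤ n − ⌈n/χ_cf(H)⌉ + 1 is tight. -/

import Mathlib

open scoped Classical

noncomputable section

/-- A conflict-free coloring of a hyperedge set `E` with `k` colors: every hyperedge
has some color occurring on exactly one of its vertices. -/
def IsCFColoring {V : Type} {k : ℕ} (E : Set (Finset V)) (C : V → Fin k) : Prop :=
  ∀ e ∈ E, ∃ c : Fin k, (e.filter fun v => C v = c).card = 1

/-- A unique-maximum coloring of a hyperedge set `E` with `k` colors: every hyperedge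
has exactly one vertex whose color is maximum on the hyperedge. -/
def IsUMColoring {V : Type} {k : ℕ} (E : Set (Finset V)) (C : V → Fin k) : Prop :=
  ∀ e ∈ E, ∃! v, v ∈ e ∧ ∀ u ∈ e, C u ≤ C v

/-- An odd coloring of a hyperedge set `E` with `k` colors: every hyperedge
has some color occurring on an odd number of its vertices. -/
def IsOddColoring {V : Type} {k : ℕ} (E : Set (Finset V)) (C : V → Fin k) : Prop :=
  ∀ e ∈ E, ∃ c : Fin k, Odd ((e.filter fun v => C v = c).card)

/-- The conflict-free chromatic number of a hypergraph. -/
def cfNum {V : Type} (E : Set (Finset V)) : ℕ :=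
  sInf {k | ∃ C : V → Fin k, IsCFColoring E C}

/-- The unique-maximum chromatic number of a hypergraph. -/
def umNum {V : Type} (E : Set (Finset V)) : ℕ :=
  sInf {k | ∃ C : V → Fin k, IsUMColoring E C}

/-- The odd chromatic number of a hypergraph. -/
def oddNum {V : Type} (E : Set (Finset V)) : ℕ :=
  sInf {k | ∃ C : V → Fin k, IsOddColoring E C}

/-- The hyperedges of the path hypergraph of a graph `G`: vertex sets of simple paths. -/
def pathEdges {V : Type} (G : SimpleGraph V) : Set (Finset V) :=
  {S | ∃ (u v : V) (p : G.Walk u v), p.IsPath ∧ S = p.support.toFinset}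

/-- Unique-maximum chromatic number of a graph with respect to paths. -/
def UM {V : Type} (G : SimpleGraph V) : ℕ := umNum (pathEdges G)

/-- Conflict-free chromatic number of a graph with respect to paths. -/
def CF {V : Type} (G : SimpleGraph V) : ℕ := cfNum (pathEdges G)

/-- Odd chromatic number of a graph with respect to paths. -/
def ODD {V : Type} (G : SimpleGraph V) : ℕ := oddNum (pathEdges G)

/-- The complete binary tree with `d` levels (`2^d - 1` vertices), with vertices the
binary strings of length `< d`; each vertex `l` is adjacent to its children `b :: l`. -/
def binaryTree (d : ℕ) : SimpleGraph {l : List Bool // l.length < d} :=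
  SimpleGraph.fromRel fun a b => ∃ bit : Bool, b.1 = bit :: a.1

/-- `IsSubdivPaths G H f P` : the data `f` (branch vertices) and `P` (a path of `H` for
every edge of `G`) witness that `H` contains a subdivision of `G` as a subgraph:
`f` is injective, the paths are internally disjoint from each other and from the
branch vertices. -/
def IsSubdivPaths {V W : Type} (G : SimpleGraph V) (H : SimpleGraph W) (f : V → W)
    (P : ∀ u v, G.Adj u v → H.Walk (f u) (f v)) : Prop :=
  Function.Injective f ∧
  (∀ u v (h : G.Adj u v), (P u v h).IsPath) ∧
  (∀ u v (h : G.Adj u v), P v u h.symm = (P u v h).reverse) ∧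
  (∀ u v (h : G.Adj u v) (w : W),
    w ∈ (P u v h).support → w ≠ f u → w ≠ f v → w ∉ Set.range f) ∧
  (∀ u v (h : G.Adj u v) (u' v' : V) (h' : G.Adj u' v'), s(u, v) ≠ s(u', v') →
    ∀ w : W, w ∈ (P u v h).support → w ∈ (P u' v' h').support → w ∈ Set.range f)

/-- `H` contains a subdivision of `G` as a subgraph. -/
def ContainsSubdivision {V W : Type} (G : SimpleGraph V) (H : SimpleGraph W) : Prop :=
  ∃ f P, IsSubdivPaths G H f P

/-- `IsSubdivision G H f P` : the data `f`, `P` witness that `H` is (exactly) a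
subdivision of `G`: additionally to `IsSubdivPaths`, every vertex of `H` and every
edge of `H` comes from some path replacing an edge of `G`, or is a branch vertex. -/
def IsSubdivision {V W : Type} (G : SimpleGraph V) (H : SimpleGraph W) (f : V → W)
    (P : ∀ u v, G.Adj u v → H.Walk (f u) (f v)) : Prop :=
  IsSubdivPaths G H f P ∧
  (∀ w : W, w ∈ Set.range f ∨ ∃ u v h, w ∈ (P u v h).support) ∧
  (∀ a b : W, H.Adj a b ↔ ∃ u v h, s(a, b) ∈ (P u v h).edges)

/-- `H` is a subdivision of `G`. -/
def Subdivides {V W : Type} (G : SimpleGraph V) (H : SimpleGraph W) : Prop :=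
  ∃ f P, IsSubdivision G H f P

/-- A graph is UM-critical if every proper subgraph has strictly smaller
unique-maximum chromatic number with respect to paths. -/
def UMCritical {V : Type} (G : SimpleGraph V) : Prop :=
  ∀ G' : G.Subgraph, G' ≠ ⊤ → UM G'.coe < UM G

/-- A graph is `k`-UM-critical if it is UM-critical and its UM number equals `k`. -/
def UMCriticalK {V : Type} (k : ℕ) (G : SimpleGraph V) : Prop :=
  UMCritical G ∧ UM G = k

/-- A family of sequences of distinct elements of `Fin n` is prefix set-free if no
nonempty prefix of a member (including the member itself) has the same underlying set
as another member. -/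
def IsPSF {n : ℕ} (F : Finset (List (Fin n))) : Prop :=
  (∀ l ∈ F, l.Nodup) ∧
  ∀ A ∈ F, ∀ B ∈ F, A ≠ B →
    ∀ p : List (Fin n), p ≠ [] → p <+: A → p.toFinset ≠ B.toFinset

/-- A `[k,d,n]` prefix set-free family: ground set `Fin n`, every sequence of length at
least `k`, and at least `2^d` members. -/
def IsPSFFamily (k d n : ℕ) (F : Finset (List (Fin n))) : Prop :=
  IsPSF F ∧ (∀ l ∈ F, k ≤ l.length) ∧ 2 ^ d ≤ F.card

theorem stmt1 (n k : ℕ) (h2 : 2 ≤ k) (hkn : k ≤ n) :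
    ∃ E : Set (Finset (Fin n)),
      cfNum E = k ∧ umNum E = n - (n + k - 1) / k + 1 := by
  set m := (n + k - 1) / k with hm
  have hk0 : 0 < k := by omega
  have hn0 : 0 < n := by omega
  obtain ⟨r, hrk, hdm⟩ : ∃ r, r < k ∧ k * m + r = n + k - 1 :=
    ⟨(n + k - 1) % k, Nat.mod_lt _ hk0, Nat.div_add_mod _ _⟩
  have hnkm : n ≤ k * m := by omega
  have hm1 : 1 ≤ m := (Nat.le_div_iff_mul_le hk0).2 (by omega)
  -- the partition into residue classes mod k
  set p : Fin n → Fin k := fun v => ⟨v.1 % k, Nat.mod_lt _ hk0⟩ with hp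
  set z : Fin k := ⟨0, hk0⟩ with hz
  set E : Set (Finset (Fin n)) :=
    {e : Finset (Fin n) | ∃ i : Fin k, (e.filter fun v => p v = i).card = 1} with hE
  -- multiples of k below n: k*j < n for j < m
  have hkj : ∀ j : ℕ, j < m → k * j < n := by
    intro j hj
    have h1 : k * (j + 1) ≤ k * m := Nat.mul_le_mul_left k hj
    rw [Nat.mul_succ] at h1
    omega
  -- every part has at most m elements
  have hsize : ∀ i : Fin k, (Finset.univ.filter fun v : Fin n => p v = i).card ≤ m := by
    intro i
    have := Finset.card_le_card_of_injOn (s := Finset.univ.filter fun v : Fin n => p v = i)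
      (t := Finset.range m) (fun v => v.1 / k) ?_ ?_
    · simpa using this
    · intro v hv
      simp only [Finset.coe_filter, Finset.mem_filter, Finset.mem_univ, true_and] at hv
      rw [Finset.mem_coe, Finset.mem_range]
      exact (Nat.div_lt_iff_lt_mul hk0).2 (lt_of_lt_of_le v.2 (by rw [mul_comm]; exact hnkm))
    · intro u hu v hv huv
      simp only [Finset.coe_filter, Set.mem_setOf_eq] at hu hv
      have hu' : u.1 % k = i.1 := congrArg Fin.val hu.2
      have hv' : v.1 % k = i.1 := congrArg Fin.val hv.2
      have h1 := Nat.div_add_mod u.1 k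
      have h2 := Nat.div_add_mod v.1 k
      have huv' : u.1 / k = v.1 / k := huv
      apply Fin.ext
      rw [← h1, ← h2, huv', hu', hv']
  -- part 0 has at least m elements
  have hbig : m ≤ (Finset.univ.filter fun v : Fin n => p v = z).card := by
    have := Finset.card_le_card_of_injOn (s := Finset.range m)
      (t := Finset.univ.filter fun v : Fin n => p v = z)
      (fun j => ⟨(k * j) % n, Nat.mod_lt _ hn0⟩) ?_ ?_
    · simpa using this
    · intro j hj
      rw [Finset.mem_coe, Finset.mem_range] at hj
      have hlt : k * j < n := hkj j hj
      simp only [Finset.mem_coe, Finset.mem_filter, Finset.mem_univ, true_and]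
      apply Fin.ext
      show ((k * j) % n) % k = z.1
      rw [Nat.mod_eq_of_lt hlt, Nat.mul_mod_right]
    · intro a ha b hb hab
      simp only [Finset.coe_range, Set.mem_Iio] at ha hb
      have h1 : (k * a) % n = (k * b) % n := congrArg Fin.val hab
      rw [Nat.mod_eq_of_lt (hkj a ha), Nat.mod_eq_of_lt (hkj b hb)] at h1
      exact Nat.eq_of_mul_eq_mul_left hk0 h1
  -- each part is nonempty
  have hne : ∀ i : Fin k, ∃ v : Fin n, p v = i := by
    intro i
    exact ⟨⟨i.1, lt_of_lt_of_le i.2 hkn⟩, Fin.ext (Nat.mod_eq_of_lt i.2)⟩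
  -- pairs across parts are edges
  have hpair : ∀ u v : Fin n, p u ≠ p v → ({u, v} : Finset (Fin n)) ∈ E := by
    intro u v hpuv
    refine ⟨p u, ?_⟩
    have : ({u, v} : Finset (Fin n)).filter (fun w => p w = p u) = {u} := by
      ext w
      simp only [Finset.mem_filter, Finset.mem_insert, Finset.mem_singleton]
      constructor
      · rintro ⟨h1 | h1, h2⟩
        · exact h1
        · exact absurd (h1 ▸ h2) (Ne.symm hpuv)
      · rintro rfl; exact ⟨Or.inl rfl, rfl⟩
    rw [this, Finset.card_singleton]
  -- triples with two vertices in a part and one outside are edges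
  have htriple : ∀ u v w : Fin n, p u = p v → p w ≠ p u →
      ({u, v, w} : Finset (Fin n)) ∈ E := by
    intro u v w huv hw
    refine ⟨p w, ?_⟩
    have : ({u, v, w} : Finset (Fin n)).filter (fun x => p x = p w) = {w} := by
      ext x
      simp only [Finset.mem_filter, Finset.mem_insert, Finset.mem_singleton]
      constructor
      · rintro ⟨h1 | h1 | h1, h2⟩
        · exact absurd (h1 ▸ h2) (Ne.symm hw)
        · exact absurd ((h1 ▸ h2).symm.trans huv.symm).symm (Ne.symm hw)
        · exact h1
      · rintro rfl; exact ⟨Or.inr (Or.inr rfl), rfl⟩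
    rw [this, Finset.card_singleton]
  -- in a CF or UM coloring, vertices in different parts get different colors
  have hdistCF : ∀ {s : ℕ} (C : Fin n → Fin s), IsCFColoring E C →
      ∀ u v : Fin n, p u ≠ p v → C u ≠ C v := by
    intro s C hC u v hpuv hCuv
    have huv : u ≠ v := fun h => hpuv (h ▸ rfl)
    obtain ⟨c, hc⟩ := hC {u, v} (hpair u v hpuv)
    rcases eq_or_ne (C u) c with h | h
    · have hsub : ({u, v} : Finset (Fin n)) ⊆ ({u, v} : Finset (Fin n)).filter
          (fun w => C w = c) := by
        intro w hw
        rw [Finset.mem_filter]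
        refine ⟨hw, ?_⟩
        rcases Finset.mem_insert.1 hw with rfl | hw'
        · exact h
        · rw [Finset.mem_singleton] at hw'; subst hw'; rw [← hCuv]; exact h
      have h2 : 2 ≤ (({u, v} : Finset (Fin n)).filter (fun w => C w = c)).card := by
        calc 2 = ({u, v} : Finset (Fin n)).card := by
                rw [Finset.card_insert_of_notMem (by simpa using huv), Finset.card_singleton]
          _ ≤ _ := Finset.card_le_card hsub
      omega
    · have : ({u, v} : Finset (Fin n)).filter (fun w => C w = c) = ∅ := by
        rw [Finset.filter_eq_empty_iff]
        intro w hw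
        rcases Finset.mem_insert.1 hw with rfl | hw'
        · exact h
        · rw [Finset.mem_singleton] at hw'; subst hw'; rw [← hCuv]; exact h
      rw [this] at hc
      simp at hc
  have hdistUM : ∀ {s : ℕ} (C : Fin n → Fin s), IsUMColoring E C →
      ∀ u v : Fin n, p u ≠ p v → C u ≠ C v := by
    intro s C hC u v hpuv hCuv
    have huv : u ≠ v := fun h => hpuv (h ▸ rfl)
    obtain ⟨w, _, hw2⟩ := hC {u, v} (hpair u v hpuv)
    have hCC : ∀ x ∈ ({u, v} : Finset (Fin n)), C x = C u := by
      intro x hx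
      rcases Finset.mem_insert.1 hx with rfl | hx'
      · rfl
      · rw [Finset.mem_singleton] at hx'; subst hx'; exact hCuv.symm
    have hmax : ∀ x ∈ ({u, v} : Finset (Fin n)), ∀ y ∈ ({u, v} : Finset (Fin n)),
        C y ≤ C x := by
      intro x hx y hy
      rw [hCC x hx, hCC y hy]
    have h1 : u = w := hw2 u ⟨Finset.mem_insert_self _ _,
      hmax u (Finset.mem_insert_self _ _)⟩
    have h2 : v = w := hw2 v ⟨Finset.mem_insert.2 (Or.inr (Finset.mem_singleton_self _)),
      hmax v (Finset.mem_insert.2 (Or.inr (Finset.mem_singleton_self _)))⟩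
    exact huv (h1.trans h2.symm)
  refine ⟨E, ?_, ?_⟩
  · -- cfNum E = k
    apply le_antisymm
    · exact Nat.sInf_le ⟨p, fun e he => he⟩
    · refine le_csInf ⟨k, p, fun e he => he⟩ ?_
      rintro s ⟨C, hC⟩
      have hdist := hdistCF C hC
      have hinj : Function.Injective (fun i : Fin k => C (hne i).choose) := by
        intro i j hij
        by_contra hij'
        have : p (hne i).choose ≠ p (hne j).choose := by
          rw [(hne i).choose_spec, (hne j).choose_spec]; exact hij'
        exact hdist _ _ this hij
      simpa using Fintype.card_le_of_injective _ hinj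
  · -- umNum E = n - m + 1
    apply le_antisymm
    · -- upper bound: construct a UM coloring with n - m + 1 colors
      have hcard : Fintype.card {v : Fin n // ¬ p v = z} ≤ Fintype.card (Fin (n - m)) := by
        rw [Fintype.card_subtype, Fintype.card_fin]
        have := Finset.card_filter_add_card_filter_not
          (s := (Finset.univ : Finset (Fin n))) (fun v : Fin n => p v = z)
        rw [Finset.card_univ, Fintype.card_fin] at this
        have hb := hbig
        omega
      obtain ⟨g⟩ := Function.Embedding.nonempty_of_card_le hcard
      set C : Fin n → Fin (n - m + 1) :=
        fun v => if h : p v = z then 0 else (g ⟨v, h⟩).succ with hC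
      have hCzero : ∀ v, p v = z → C v = 0 := by
        intro v hv; simp only [hC, dif_pos hv]
      have hCpos : ∀ v (h : ¬ p v = z), C v = (g ⟨v, h⟩).succ := by
        intro v h; simp only [hC, dif_neg h]
      refine Nat.sInf_le ⟨C, ?_⟩
      rintro e ⟨i, hi⟩
      by_cases hex : ∃ w ∈ e, ¬ p w = z
      · -- some vertex outside part 0
        have hSne : (e.filter fun v => ¬ p v = z).Nonempty := by
          obtain ⟨w, hw1, hw2⟩ := hex
          exact ⟨w, Finset.mem_filter.2 ⟨hw1, hw2⟩⟩
        obtain ⟨v, hvS, hvmax⟩ := Finset.exists_max_image _ C hSne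
        obtain ⟨hve, hvp⟩ := Finset.mem_filter.1 hvS
        refine ⟨v, ⟨hve, ?_⟩, ?_⟩
        · intro u hu
          by_cases hup : p u = z
          · rw [hCzero u hup]; exact Fin.zero_le _
          · exact hvmax u (Finset.mem_filter.2 ⟨hu, hup⟩)
        · rintro v' ⟨hv'e, hv'max⟩
          have hle1 : C v ≤ C v' := hv'max v hve
          have hv'p : ¬ p v' = z := by
            intro h0
            rw [hCzero v' h0] at hle1
            have : C v = 0 := le_antisymm hle1 (Fin.zero_le _)
            rw [hCpos v hvp] at this
            exact Fin.succ_ne_zero _ this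
          have hle2 : C v' ≤ C v := hvmax v' (Finset.mem_filter.2 ⟨hv'e, hv'p⟩)
          have hCeq : C v' = C v := le_antisymm hle2 hle1
          rw [hCpos v hvp, hCpos v' hv'p] at hCeq
          have := g.injective (Fin.succ_injective _ hCeq)
          exact congrArg Subtype.val this
      · -- all of e in part 0: then e is a singleton
        push_neg at hex
        have hi0 : i = z := by
          by_contra hi0
          have : e.filter (fun v => p v = i) = ∅ := by
            rw [Finset.filter_eq_empty_iff]
            intro w hw h
            exact hi0 ((hex w hw) ▸ h).symm
          rw [this] at hi
          simp at hi
        have hef : e.filter (fun v => p v = i) = e := by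
          rw [Finset.filter_eq_self]
          intro w hw; rw [hi0]; exact hex w hw
        rw [hef] at hi
        obtain ⟨v, hv⟩ := Finset.card_eq_one.1 hi
        subst hv
        refine ⟨v, ⟨Finset.mem_singleton_self v, ?_⟩, ?_⟩
        · intro u hu; rw [Finset.mem_singleton] at hu; subst hu; exact le_refl _
        · rintro v' ⟨hv', _⟩
          exact Finset.mem_singleton.1 hv'
    · -- lower bound
      refine le_csInf ⟨n, fun v => ⟨v.1, v.2⟩, ?_⟩ ?_
      · -- the identity coloring is UM (all colors distinct)
        intro e he
        have hinj : ∀ u v : Fin n, (⟨u.1, u.2⟩ : Fin n) = ⟨v.1, v.2⟩ → u = v := by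
          intro u v h; exact Fin.ext (congrArg Fin.val h)
        obtain ⟨i, hi⟩ := he
        have hene : e.Nonempty := by
          rcases Finset.eq_empty_or_nonempty e with rfl | h
          · simp at hi
          · exact h
        obtain ⟨v, hv, hvmax⟩ := Finset.exists_max_image e (fun v : Fin n => (⟨v.1, v.2⟩ : Fin n)) hene
        refine ⟨v, ⟨hv, hvmax⟩, ?_⟩
        rintro v' ⟨hv', hv'max⟩
        exact hinj v' v (le_antisymm (hvmax v' hv') (hv'max v hv))
      · rintro s ⟨C, hC⟩
        have hdist := hdistUM C hC
        -- a color repeated in a part forces everything outside that part to be larger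
        have hup : ∀ u v w : Fin n, u ≠ v → C u = C v → p w ≠ p u → C u < C w := by
          intro u v w huv hCuv hw
          have hpuv : p u = p v := by
            by_contra h; exact hdist u v h hCuv
          obtain ⟨x, _, hx2⟩ := hC {u, v, w} (htriple u v w hpuv hw)
          by_contra hlt
          push_neg at hlt
          have hmax : ∀ y ∈ ({u, v, w} : Finset (Fin n)), C y ≤ C u := by
            intro y hy
            rcases Finset.mem_insert.1 hy with rfl | hy'
            · exact le_refl _
            rcases Finset.mem_insert.1 hy' with rfl | hy''
            · rw [← hCuv]
            · rw [Finset.mem_singleton] at hy''; subst hy''; exact hlt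
          have hmaxv : ∀ y ∈ ({u, v, w} : Finset (Fin n)), C y ≤ C v := by
            intro y hy; rw [← hCuv]; exact hmax y hy
          have h1 : u = x := hx2 u ⟨Finset.mem_insert_self _ _, hmax⟩
          have h2 : v = x := hx2 v
            ⟨Finset.mem_insert.2 (Or.inr (Finset.mem_insert_self _ _)), hmaxv⟩
          exact huv (h1.trans h2.symm)
        by_cases hcol : ∃ u v : Fin n, u ≠ v ∧ C u = C v
        · obtain ⟨u0, v0, huv0, hCuv0⟩ := hcol
          set i0 := p u0 with hi0
          set T : Finset (Fin n) := insert u0 (Finset.univ.filter fun v => ¬ p v = i0)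
            with hT
          have hinjT : Set.InjOn C T := by
            intro a ha b hb hab
            by_contra hne'
            -- a, b is a collision, so p a = p b, and both must equal i0... 
            have hpab : p a = p b := by
              by_contra h; exact hdist a b h hab
            -- any vertex outside part (p a) has color > C a; apply with u0,v0 collision
            have hpa : p a = i0 := by
              by_contra hpa
              rw [hi0] at hpa
              have h1 : C u0 < C a := hup u0 v0 a huv0 hCuv0 hpa
              have h2 : C a < C u0 := hup a b u0 hne' hab (fun h => hpa h.symm)
              exact absurd (h1.trans h2) (lt_irrefl _)
            have hpb : p b = i0 := hpab ▸ hpa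
            have ha' : a = u0 := by
              rcases (by simpa [hT] using ha : a = u0 ∨ ¬ p a = i0) with h | h
              · exact h
              · exact absurd hpa h
            have hb' : b = u0 := by
              rcases (by simpa [hT] using hb : b = u0 ∨ ¬ p b = i0) with h | h
              · exact h
              · exact absurd hpb h
            exact hne' (ha'.trans hb'.symm)
          have hcardT : (Finset.univ.filter fun v : Fin n => ¬ p v = i0).card + 1 = T.card := by
            rw [hT, Finset.card_insert_of_notMem (by simp [hi0])]
          have hTle : T.card ≤ s := by
            have := Finset.card_le_card_of_injOn C (fun a _ => Finset.mem_univ (C a)) hinjT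
            simpa using this
          have hsplit := Finset.card_filter_add_card_filter_not
            (s := (Finset.univ : Finset (Fin n))) (fun v : Fin n => p v = i0)
          rw [Finset.card_univ, Fintype.card_fin] at hsplit
          have hsz := hsize i0
          omega
        · push_neg at hcol
          have hinj : Function.Injective C := by
            intro a b hab
            by_contra h
            exact hcol a b h hab
          have := Fintype.card_le_of_injective C hinj
          simp only [Fintype.card_fin] at this
          omega
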